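/- arXiv:1410.6839 — 13 statements merged into one kernel-verified Lean document; each statement's English description precedes it below -/
import Mathlib

section
/- If H is an H-subgroup of a finite group G and H is subnormal in G, then H is normal in G. -/
def IsHSubgroup {G : Type*} [Group G] (H : Subgroup G) : Prop :=
  ∀ g : G, Subgroup.map (MulAut.conj g).toMonoidHom H ⊓ Subgroup.normalizer (H : Set G) ≤ H

/-- A subgroup is subnormal if there is a chain from it to the whole group in which
each term is normal in the next. -/
def IsSubnormal {G : Type*} [Group G] (H : Subgroup G) : Prop :=
  ∃ (n : ℕ) (s : Fin (n + 1) → Subgroup G), s 0 = H ∧ s (Fin.last n) = ⊤ ∧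
    ∀ i : Fin n, s i.castSucc ≤ s i.succ ∧ ((s i.castSucc).subgroupOf (s i.succ)).Normal

theorem hSubgroup_subnormal_normal {G : Type*} [Group G] [Finite G] (H : Subgroup G)
    (hH : IsHSubgroup H) (hsn : IsSubnormal H) : H.Normal := by
  obtain ⟨n, s, h0, hlast, hstep⟩ := hsn
  have key : ∀ i : Fin (n + 1), H ≤ s i ∧ s i ≤ Subgroup.normalizer (H : Set G) := by
    intro i
    induction i using Fin.induction with
    | zero => exact ⟨h0.ge, h0.le.trans (Subgroup.le_normalizer)⟩
    | succ i ih =>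
      obtain ⟨hle, hnorm⟩ := ih
      refine ⟨hle.trans (hstep i).1, ?_⟩
      intro g hg
      have : Finite (H : Set G) := Subgroup.instFiniteSubtypeMem H
      apply Subgroup.mem_normalizer_fintype
      intro h hh
      -- g * h * g⁻¹ ∈ s i.castSucc
      have hmem : g * h * g⁻¹ ∈ s i.castSucc := by
        have hN := (hstep i).2
        have hgs : g ∈ s i.succ := hg
        have hhs : h ∈ s i.succ := (hle.trans (hstep i).1) hh
        have hh' : (⟨h, hhs⟩ : s i.succ) ∈ (s i.castSucc).subgroupOf (s i.succ) := hle hh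
        have := hN.conj_mem _ hh' ⟨g, hgs⟩
        simpa [Subgroup.mem_subgroupOf] using this
      refine hH g ⟨?_, hnorm hmem⟩
      exact ⟨h, hh, rfl⟩
  have := (key (Fin.last n)).2
  rw [hlast] at this
  exact Subgroup.normalizer_eq_top_iff.mp (top_le_iff.mp this)
end

section
/- If H is an H-subgroup of a finite group G and H ≤ K ≤ G, then H is an H-subgroup of K. -/
theorem hSubgroup_of_le {G : Type*} [Group G] [Finite G] (H K : Subgroup G)
    (hHK : H ≤ K) (hH : IsHSubgroup H) : IsHSubgroup (H.subgroupOf K) := by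
  intro k x hx
  obtain ⟨hx1, hx2⟩ := hx
  have hforward : ∀ h : G, h ∈ H → (x : G) * h * (x : G)⁻¹ ∈ H := by
    intro h hh
    exact (Subgroup.mem_normalizer_iff.mp hx2 ⟨h, hHK hh⟩).mp hh
  have hmap : Subgroup.map (MulAut.conj (x : G)).toMonoidHom H ≤ H := by
    rintro _ ⟨h, hh, rfl⟩
    exact hforward h hh
  have hcard : Nat.card H ≤ Nat.card (Subgroup.map (MulAut.conj (x : G)).toMonoidHom H) :=
    le_of_eq (Nat.card_congr
      (Subgroup.equivMapOfInjective H _ (MulAut.conj (x : G)).injective).toEquiv)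
  have heq : Subgroup.map (MulAut.conj (x : G)).toMonoidHom H = H :=
    Subgroup.eq_of_le_of_card_ge hmap hcard
  have hxN : (x : G) ∈ Subgroup.normalizer (H : Set G) := by
    rw [Subgroup.mem_normalizer_iff]
    intro h
    constructor
    · exact hforward h
    · intro hh
      rw [← heq] at hh
      obtain ⟨h', hh', he⟩ := hh
      simp only [MulEquiv.coe_toMonoidHom, MulAut.conj_apply] at he
      have : h' = h := mul_left_cancel (mul_right_cancel he)
      rwa [← this]
  obtain ⟨h, hh, he⟩ := hx1
  have hxH : (x : G) ∈ Subgroup.map (MulAut.conj (k : G)).toMonoidHom H := by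
    refine ⟨(h : G), hh, ?_⟩
    have : ((MulAut.conj k h : K) : G) = (x : G) := congrArg _ he
    simpa using this
  exact hH (k : G) ⟨hxH, hxN⟩
end

section
/- Let G be a finite group, N a normal subgroup of G, and H a subgroup of G with N ≤ H. Then H is an H-subgroup of G if and only if H/N is an H-subgroup of G/N. -/
theorem hSubgroup_quotient_iff {G : Type*} [Group G] [Finite G] (N H : Subgroup G)
    [N.Normal] (hNH : N ≤ H) :
    IsHSubgroup H ↔ IsHSubgroup (H.map (QuotientGroup.mk' N)) := by
  set f := QuotientGroup.mk' N with hf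
  have hsurj : Function.Surjective f := QuotientGroup.mk'_surjective N
  have hker : f.ker = N := QuotientGroup.ker_mk' N
  -- conjugation commutes with the quotient map
  have hconj : ∀ g : G, ((MulAut.conj (f g)).toMonoidHom.comp f : G →* G ⧸ N)
      = f.comp (MulAut.conj g).toMonoidHom := by
    intro g
    ext x
    simp [MulAut.conj, map_mul]
  have hmapconj : ∀ (g : G) (K : Subgroup G),
      (K.map f).map (MulAut.conj (f g)).toMonoidHom
        = (K.map (MulAut.conj g).toMonoidHom).map f := by
    intro g K
    rw [Subgroup.map_map, Subgroup.map_map, hconj]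
  have hcmH : (H.map f).comap f = H := by
    rw [Subgroup.comap_map_eq, hker, sup_eq_left.mpr hNH]
  constructor
  · intro hH gb
    obtain ⟨g, rfl⟩ := hsurj gb
    rintro x ⟨hx1, hx2⟩
    rw [hmapconj] at hx1
    obtain ⟨b, hb, rfl⟩ := hx1
    -- normalizer of image: pull back
    have hnorm : (Subgroup.normalizer ((H.map f : Subgroup (G ⧸ N)) : Set (G ⧸ N))).comap f = Subgroup.normalizer (H : Set G) := by
      rw [Subgroup.comap_normalizer_eq_of_surjective _ hsurj, hcmH]
    have hb2 : b ∈ Subgroup.normalizer (H : Set G) := by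
      rw [← hnorm]; exact hx2
    exact ⟨b, hH g ⟨hb, hb2⟩, rfl⟩
  · intro hQ g
    rintro x ⟨hx1, hx2⟩
    have h1 : f x ∈ (H.map f).map (MulAut.conj (f g)).toMonoidHom := by
      rw [hmapconj]
      exact ⟨x, hx1, rfl⟩
    have h2 : f x ∈ Subgroup.normalizer ((H.map f : Subgroup (G ⧸ N)) : Set (G ⧸ N)) := by
      have := Subgroup.le_normalizer_map (H := H) f
      exact this ⟨x, hx2, rfl⟩
    have : f x ∈ H.map f := hQ (f g) ⟨h1, h2⟩
    rw [← hcmH]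
    exact this
end

section
/- Let G be a finite group, H a subgroup of G, and N a normal subgroup of G with N ≤ N_G(H). If H is an H-subgroup of G, then N_G(HN) = N_G(H) and HN is an H-subgroup of G. -/
open Subgroup

private lemma conjMap_eq_of_mem_normalizer {G : Type*} [Group G] {H : Subgroup G} {x : G}
    (hx : x ∈ Subgroup.normalizer (H : Set G)) : Subgroup.map (MulAut.conj x).toMonoidHom H = H := by
  ext y
  simp only [Subgroup.mem_map, MulEquiv.coe_toMonoidHom, MulAut.conj_apply]
  constructor
  · rintro ⟨h, hh, rfl⟩
    exact (Subgroup.mem_normalizer_iff.mp hx h).mp hh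
  · intro hy
    refine ⟨x⁻¹ * y * x, ?_, by group⟩
    have := (Subgroup.mem_normalizer_iff.mp hx (x⁻¹ * y * x)).mpr
    apply this
    convert hy using 1
    group

private lemma mem_normalizer_of_conjMap_eq {G : Type*} [Group G] {H : Subgroup G} {x : G}
    (h : Subgroup.map (MulAut.conj x).toMonoidHom H = H) : x ∈ Subgroup.normalizer (H : Set G) := by
  rw [Subgroup.mem_normalizer_iff]
  intro y
  constructor
  · intro hy
    rw [← h]
    exact ⟨y, hy, rfl⟩
  · intro hy
    rw [← h] at hy
    obtain ⟨z, hz, hzz⟩ := hy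
    simp only [MulEquiv.coe_toMonoidHom, MulAut.conj_apply] at hzz
    have : z = y := by
      have := mul_left_cancel (mul_right_cancel hzz)
      exact this
    rwa [← this]

private lemma conjMap_normal {G : Type*} [Group G] (N : Subgroup G) [hN : N.Normal] (g : G) :
    Subgroup.map (MulAut.conj g).toMonoidHom N = N :=
  conjMap_eq_of_mem_normalizer (by rw [Subgroup.normalizer_eq_top_iff.mpr hN]; trivial)

private lemma card_conjMap {G : Type*} [Group G] (H : Subgroup G) (g : G) :
    Nat.card (Subgroup.map (MulAut.conj g).toMonoidHom H) = Nat.card H :=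
  (Nat.card_congr (H.equivMapOfInjective _ (MulAut.conj g).injective).toEquiv).symm

theorem hSubgroup_join_normal {G : Type*} [Group G] [Finite G] (H N : Subgroup G)
    [N.Normal] (hNn : N ≤ Subgroup.normalizer (H : Set G)) (hH : IsHSubgroup H) :
    Subgroup.normalizer ((H ⊔ N : Subgroup G) : Set G) = Subgroup.normalizer (H : Set G) ∧ IsHSubgroup (H ⊔ N) := by
  have hsub : H ⊔ N ≤ Subgroup.normalizer (H : Set G) := sup_le Subgroup.le_normalizer hNn
  have hnorm : Subgroup.normalizer ((H ⊔ N : Subgroup G) : Set G) = Subgroup.normalizer (H : Set G) := by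
    apply le_antisymm
    · intro x hx
      -- map conj x H ≤ H ⊔ N ≤ normalizer H
      have h1 : Subgroup.map (MulAut.conj x).toMonoidHom H ≤ H ⊔ N := by
        calc Subgroup.map (MulAut.conj x).toMonoidHom H
            ≤ Subgroup.map (MulAut.conj x).toMonoidHom (H ⊔ N) :=
              Subgroup.map_mono le_sup_left
          _ = H ⊔ N := conjMap_eq_of_mem_normalizer hx
      have h2 : Subgroup.map (MulAut.conj x).toMonoidHom H ≤ H :=
        fun y hy => hH x ⟨hy, hsub (h1 hy)⟩
      have h3 : Subgroup.map (MulAut.conj x).toMonoidHom H = H :=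
        Subgroup.eq_of_le_of_card_ge h2 (card_conjMap H x).ge
      exact mem_normalizer_of_conjMap_eq h3
    · intro x hx
      apply mem_normalizer_of_conjMap_eq
      rw [Subgroup.map_sup, conjMap_eq_of_mem_normalizer hx, conjMap_normal N x]
  refine ⟨hnorm, fun g x hx => ?_⟩
  obtain ⟨hx1, hx2⟩ := hx
  rw [hnorm] at hx2
  rw [Subgroup.map_sup, conjMap_normal N g] at hx1
  -- x ∈ (map conj g H) ⊔ N ; write x = h' * n
  have hmemset : x ∈ (↑(Subgroup.map (MulAut.conj g).toMonoidHom H ⊔ N) : Set G) := hx1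
  rw [Subgroup.mul_normal] at hmemset
  obtain ⟨h', hh', n, hn, rfl⟩ := hmemset
  have hn' : n ∈ Subgroup.normalizer (H : Set G) := hNn hn
  have hh'norm : h' ∈ Subgroup.normalizer (H : Set G) := by
    have : h' = (h' * n) * n⁻¹ := by group
    rw [this]
    exact mul_mem hx2 (inv_mem hn')
  have : h' ∈ H := hH g ⟨hh', hh'norm⟩
  exact mul_mem (le_sup_left (α := Subgroup G) this) (le_sup_right (α := Subgroup G) hn)
end

section
/- Let G be a finite group and H ≤ K ≤ G. If H is an HC-subgroup of G, then H is an HC-subgroup of K. -/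
open scoped Pointwise


def IsHCSubgroup {G : Type*} [Group G] (H : Subgroup G) : Prop :=
  ∃ T : Subgroup G, T.Normal ∧ H ⊔ T = ⊤ ∧
    ∀ g : G, Subgroup.map (MulAut.conj g).toMonoidHom H ⊓ (T ⊓ Subgroup.normalizer (H : Set G)) ≤ H

theorem hcSubgroup_of_le {G : Type*} [Group G] [Finite G] (H K : Subgroup G)
    (hHK : H ≤ K) (hH : IsHCSubgroup H) : IsHCSubgroup (H.subgroupOf K) := by
  obtain ⟨T, hTn, hsup, hcond⟩ := hH
  refine ⟨T.subgroupOf K, hTn.subgroupOf K, ?_, ?_⟩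
  · ext k
    simp only [Subgroup.mem_top, iff_true]
    have hk : (k : G) ∈ ((H : Set G) * (T : Set G)) := by
      rw [← Subgroup.mul_normal]; exact hsup ▸ Subgroup.mem_top _
    obtain ⟨h, hh, t, ht, hht⟩ := hk
    have hhK : h ∈ K := hHK hh
    have htK : t ∈ K := by
      have : t = h⁻¹ * (k : G) := by rw [← hht]; group
      rw [this]; exact mul_mem (inv_mem hhK) k.2
    have : k = (⟨h, hhK⟩ : K) * ⟨t, htK⟩ := by ext; exact hht.symm
    rw [this]
    exact Subgroup.mul_mem_sup (by simpa [Subgroup.mem_subgroupOf])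
      (by simpa [Subgroup.mem_subgroupOf])
  · intro g x hx
    rw [Subgroup.mem_inf, Subgroup.mem_inf] at hx
    obtain ⟨h1, h2, h3⟩ := hx
    rw [Subgroup.mem_map] at h1
    obtain ⟨y, hy, hyx⟩ := h1
    rw [Subgroup.mem_subgroupOf] at hy
    have hmap : (x : G) ∈ Subgroup.map (MulAut.conj (g : G)).toMonoidHom H := by
      refine ⟨(y : G), hy, ?_⟩
      have := congrArg (Subgroup.subtype K) hyx
      simpa using this
    rw [Subgroup.mem_subgroupOf] at h2
    have hnorm : (x : G) ∈ Subgroup.normalizer (H : Set G) := by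
      rw [Subgroup.mem_normalizer_iff]
      rw [Subgroup.mem_normalizer_iff] at h3
      intro n
      constructor
      · intro hn
        have := (h3 ⟨n, hHK hn⟩).mp (by simpa [Subgroup.mem_subgroupOf])
        rw [Subgroup.mem_subgroupOf] at this
        simpa using this
      · intro hn
        have hnK : n ∈ K := by
          have : n = (x : G)⁻¹ * ((x : G) * n * (x : G)⁻¹) * (x : G) := by group
          rw [this]
          exact mul_mem (mul_mem (inv_mem x.2) (hHK hn)) x.2
        have := (h3 ⟨n, hnK⟩).mpr (by simpa [Subgroup.mem_subgroupOf])
        rwa [Subgroup.mem_subgroupOf] at this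
    rw [Subgroup.mem_subgroupOf]
    exact hcond (g : G) ⟨hmap, h2, hnorm⟩
end

section
/- Let G be a finite group, N a normal subgroup of G, and H a subgroup of G with N ≤ H. Then H is an HC-subgroup of G if and only if H/N is an HC-subgroup of G/N. -/
theorem hcSubgroup_quotient_iff {G : Type*} [Group G] [Finite G] (N H : Subgroup G)
    [N.Normal] (hNH : N ≤ H) :
    IsHCSubgroup H ↔ IsHCSubgroup (H.map (QuotientGroup.mk' N)) := by
  set f := QuotientGroup.mk' N with hf
  have hker : f.ker = N := QuotientGroup.ker_mk' N
  have hsurj : Function.Surjective f := QuotientGroup.mk'_surjective N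
  -- membership in the image of H pulls back exactly, since ker f = N ≤ H
  have hmemH : ∀ z : G, f z ∈ H.map f ↔ z ∈ H := by
    intro z
    constructor
    · rintro ⟨h, hh, hzh⟩
      have : h⁻¹ * z ∈ N := by
        rw [← hker]
        simp [MonoidHom.mem_ker, mul_eq_one_iff_inv_eq, hzh.symm]
      have := mul_mem hh (hNH this)
      simpa using this
    · intro hz; exact ⟨z, hz, rfl⟩
  constructor
  · rintro ⟨T, hTnorm, hHT, hcond⟩
    refine ⟨T.map f, Subgroup.Normal.map hTnorm f hsurj, ?_, ?_⟩
    · rw [← Subgroup.map_sup, hHT]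
      exact Subgroup.map_top_of_surjective f hsurj
    · rintro gb x ⟨hx1, hx2, hx3⟩
      obtain ⟨g, rfl⟩ := hsurj gb
      obtain ⟨t, ht, rfl⟩ := hx2
      -- t ∈ H^g
      obtain ⟨h', ⟨h, hh, rfl⟩, hfh⟩ := hx1
      have hconjN : ∀ a : G, a ∈ N → g * a * g⁻¹ ∈ N := fun a ha =>
        Subgroup.Normal.conj_mem ‹N.Normal› a ha g
      have hfh' : f g * f h * (f g)⁻¹ = f t := by
        simpa [MulAut.conj_apply] using hfh
      have htHg : t ∈ Subgroup.map (MulAut.conj g).toMonoidHom H := by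
        have : f (t * (g * h * g⁻¹)⁻¹) = 1 := by
          simp only [map_mul, map_inv]
          rw [hfh']
          simp
        have hn : t * (g * h * g⁻¹)⁻¹ ∈ N := by rw [← hker]; exact this
        -- N = N^g ≤ H^g, so t ∈ H^g
        have : g⁻¹ * (t * (g * h * g⁻¹)⁻¹) * g ∈ N := by
          have := Subgroup.Normal.conj_mem ‹N.Normal› _ hn g⁻¹
          simpa using this
        have hmem : g⁻¹ * t * g ∈ H := by
          have := mul_mem (hNH this) hh
          have h2 : g⁻¹ * (t * (g * h * g⁻¹)⁻¹) * g * h = g⁻¹ * t * g := by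
            group
          rwa [h2] at this
        exact ⟨g⁻¹ * t * g, hmem, by simp [MulAut.conj_apply]; group⟩
      -- t normalizes H
      have htnorm : t ∈ Subgroup.normalizer (H : Set G) := by
        have hx3' : f t ∈ Subgroup.normalizer ((H.map f : Subgroup (G ⧸ N)) : Set (G ⧸ N)) := hx3
        rw [Subgroup.mem_normalizer_iff]
        intro n
        rw [Subgroup.mem_normalizer_iff] at hx3'
        have := hx3' (f n)
        rw [hmemH n] at this
        rw [this]
        have : f t * f n * (f t)⁻¹ = f (t * n * t⁻¹) := by simp
        rw [this, hmemH]
      have : t ∈ H := hcond g ⟨htHg, ht, htnorm⟩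
      exact (hmemH t).mpr this
  · rintro ⟨T', hT'norm, hHT', hcond'⟩
    refine ⟨T'.comap f, Subgroup.Normal.comap hT'norm f, ?_, ?_⟩
    · rw [eq_top_iff]
      intro x _
      have hx : f x ∈ (↑(H.map f ⊔ T') : Set (G ⧸ N)) := by rw [hHT']; trivial
      rw [Subgroup.mul_normal (H.map f) T'] at hx
      obtain ⟨a, ha, b, hb, hab⟩ := hx
      obtain ⟨h, hh, rfl⟩ := ha
      have : f (h⁻¹ * x) = b := by
        rw [map_mul, map_inv, ← hab]; group
      have hmem : h⁻¹ * x ∈ T'.comap f := by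
        rw [Subgroup.mem_comap, this]; exact hb
      have := mul_mem (Subgroup.mem_sup_left hh : h ∈ H ⊔ T'.comap f)
        (Subgroup.mem_sup_right hmem)
      simpa using this
    · rintro g x ⟨hx1, hx2, hx3⟩
      obtain ⟨h, hh, rfl⟩ := hx1
      have key : f ((MulAut.conj g) h) ∈
          Subgroup.map (MulAut.conj (f g)).toMonoidHom (H.map f) ⊓
            (T' ⊓ Subgroup.normalizer ((H.map f : Subgroup (G ⧸ N)) : Set (G ⧸ N))) := by
        refine ⟨⟨f h, (hmemH h).mpr hh, by simp [MulAut.conj_apply]⟩, hx2, ?_⟩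
        have hx3' : (MulAut.conj g) h ∈ Subgroup.normalizer (H : Set G) := hx3
        show f ((MulAut.conj g) h) ∈ Subgroup.normalizer ((Subgroup.map f H : Subgroup (G ⧸ N)) : Set (G ⧸ N))
        rw [Subgroup.mem_normalizer_iff]
        intro nb
        obtain ⟨n, rfl⟩ := hsurj nb
        rw [hmemH n]
        rw [Subgroup.mem_normalizer_iff] at hx3'
        rw [hx3' n]
        have : f ((MulAut.conj g) h) * f n * (f ((MulAut.conj g) h))⁻¹ =
            f ((MulAut.conj g) h * n * ((MulAut.conj g) h)⁻¹) := by simp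
        rw [this, hmemH]
      have := hcond' (f g) key
      rwa [hmemH] at this
end

section
/- Let G be a finite group, p a prime, H a p-subgroup of G, and N a normal subgroup of G with p not dividing |N|. If H is an HC-subgroup of G, then HN is an HC-subgroup of G and HN/N is an HC-subgroup of G/N. -/
open Subgroup Pointwise

section Aux

variable {G : Type*} [Group G]

private lemma map_conj_normal (N : Subgroup G) [hN : N.Normal] (g : G) :
    Subgroup.map (MulAut.conj g).toMonoidHom N = N := by
  ext z
  constructor
  · rintro ⟨n, hn, rfl⟩
    simpa using hN.conj_mem n hn g
  · intro hz
    exact ⟨g⁻¹ * z * g, by simpa using hN.conj_mem z hz g⁻¹, by simp [mul_assoc]⟩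

private lemma map_conj_conj (H : Subgroup G) (a b : G) :
    Subgroup.map (MulAut.conj a).toMonoidHom (Subgroup.map (MulAut.conj b).toMonoidHom H) =
      Subgroup.map (MulAut.conj (a * b)).toMonoidHom H := by
  rw [Subgroup.map_map]
  congr 1
  ext z
  simp [mul_assoc]

/-- The HC condition, conjugated. -/
private lemma hc_conj {H T : Subgroup G} (hTn : T.Normal)
    (hc : ∀ g : G, Subgroup.map (MulAut.conj g).toMonoidHom H ⊓ (T ⊓ normalizer (H : Set G)) ≤ H)
    (g a : G) :
    Subgroup.map (MulAut.conj g).toMonoidHom H ⊓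
      (T ⊓ normalizer ((Subgroup.map (MulAut.conj a).toMonoidHom H : Subgroup G) : Set G)) ≤
      Subgroup.map (MulAut.conj a).toMonoidHom H := by
  intro x hx
  rw [Subgroup.mem_inf, Subgroup.mem_inf] at hx
  obtain ⟨hx1, hx2, hx3⟩ := hx
  have hy1 : a⁻¹ * x * a ∈ Subgroup.map (MulAut.conj (a⁻¹ * g)).toMonoidHom H := by
    obtain ⟨h, hh, rfl⟩ := hx1
    exact ⟨h, hh, by simp [mul_assoc]⟩
  have hy2 : a⁻¹ * x * a ∈ T := by
    simpa using hTn.conj_mem x hx2 a⁻¹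
  have hy3 : a⁻¹ * x * a ∈ normalizer (H : Set G) := by
    rw [← Subgroup.map_equiv_normalizer_eq H (MulAut.conj a : G ≃* G)] at hx3
    obtain ⟨z, hz, rfl⟩ := hx3
    simpa [mul_assoc] using hz
  have key : a⁻¹ * x * a ∈ H := hc (a⁻¹ * g) ⟨hy1, hy2, hy3⟩
  exact ⟨a⁻¹ * x * a, key, by simp [mul_assoc]⟩

/-- Key Sylow-theoretic step: a `p`-element normalizing `H ⊔ N` normalizes some
conjugate of `H` contained in `H ⊔ N`. -/
private lemma crux [Finite G] {p : ℕ} (hp : p.Prime) (H N : Subgroup G) [N.Normal]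
    (hHp : IsPGroup p H) (hpN : ¬ p ∣ Nat.card N) {x : G}
    (hx : x ∈ normalizer ((H ⊔ N : Subgroup G) : Set G)) (hxp : ∃ n : ℕ, x ^ p ^ n = 1) :
    ∃ a : G, Subgroup.map (MulAut.conj a).toMonoidHom H ≤ H ⊔ N ∧
      x ∈ normalizer ((Subgroup.map (MulAut.conj a).toMonoidHom H : Subgroup G) : Set G) := by
  haveI : Fact p.Prime := ⟨hp⟩
  set K := H ⊔ N with hK
  have hHK : H ≤ K := le_sup_left
  -- `p` does not divide the relative index of `H` in `K`
  have e1 : Nat.card H * H.relIndex K = Nat.card K := by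
    have := Subgroup.relIndex_mul_relIndex (⊥ : Subgroup G) H K bot_le hHK
    rwa [Subgroup.relIndex_bot_left, Subgroup.relIndex_bot_left] at this
  have e2 : Nat.card N * N.relIndex H = Nat.card K := by
    have := Subgroup.relIndex_mul_relIndex (⊥ : Subgroup G) N K bot_le le_sup_right
    rwa [Subgroup.relIndex_bot_left, Subgroup.relIndex_bot_left, hK,
      Subgroup.relIndex_sup_right] at this
  obtain ⟨n, hn⟩ := hHp.exists_card_eq
  have hm : N.relIndex H ∣ p ^ n := hn ▸ Subgroup.index_dvd_card (N.subgroupOf H)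
  obtain ⟨m, hmn, hrel⟩ := (Nat.dvd_prime_pow hp).mp hm
  have key : H.relIndex K * p ^ (n - m) = Nat.card N := by
    have h0 : 0 < p ^ m := pow_pos hp.pos m
    refine Nat.eq_of_mul_eq_mul_left h0 ?_
    calc p ^ m * (H.relIndex K * p ^ (n - m))
        = H.relIndex K * (p ^ m * p ^ (n - m)) := by ring
      _ = H.relIndex K * p ^ n := by rw [← pow_add, Nat.add_sub_cancel' hmn]
      _ = Nat.card H * H.relIndex K := by rw [hn, mul_comm]
      _ = Nat.card K := e1
      _ = Nat.card N * N.relIndex H := e2.symm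
      _ = p ^ m * Nat.card N := by rw [hrel, mul_comm]
  have hndvd : ¬ p ∣ H.relIndex K := fun h => hpN (h.trans ⟨p ^ (n - m), key.symm⟩)
  -- `H` (viewed inside `K`) is a Sylow `p`-subgroup of `K`
  have hHpK : IsPGroup p (H.subgroupOf K) := by
    intro y
    obtain ⟨k, hk⟩ := hHp ⟨((y : K) : G), y.2⟩
    refine ⟨k, ?_⟩
    have h1 : ((y : K) : G) ^ p ^ k = 1 := by simpa [Subtype.ext_iff] using hk
    ext
    simpa using h1
  have hSH : ¬ p ∣ (H.subgroupOf K).index := hndvd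
  let SH : Sylow p K := hHpK.toSylow hSH
  -- the cyclic group generated by `x` inside the normalizer of `K`
  set x' : normalizer (K : Set G) := ⟨x, hx⟩ with hx'
  have hZp : IsPGroup p (Subgroup.zpowers x') := by
    intro y
    obtain ⟨n0, hn0⟩ := hxp
    refine ⟨n0, ?_⟩
    obtain ⟨i, hi⟩ := y.2
    have hx'pow : x' ^ p ^ n0 = 1 := by
      ext
      simpa using hn0
    have hy' : (y : normalizer (K : Set G)) = x' ^ i := hi.symm
    have h2 : (y : normalizer (K : Set G)) ^ p ^ n0 = 1 := by
      calc (y : normalizer (K : Set G)) ^ p ^ n0 = (x' ^ i) ^ p ^ n0 := by rw [hy']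
        _ = (x' ^ p ^ n0) ^ i := by
            rw [← zpow_natCast (x' ^ i) (p ^ n0), ← zpow_mul, mul_comm,
              zpow_mul, zpow_natCast]
        _ = 1 := by rw [hx'pow, one_zpow]
    exact Subtype.ext (by simpa using h2)
  -- fixed point of the conjugation action on Sylow subgroups of `K`
  have hcard : ¬ p ∣ Nat.card (Sylow p K) := by
    intro h
    have h1 := card_sylow_modEq_one p K
    have h2 : (0 : ℕ) ≡ 1 [MOD p] := (Nat.modEq_zero_iff_dvd.mpr h).symm.trans h1
    have h3 := (Nat.modEq_iff_dvd' (Nat.zero_le 1)).mp h2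
    exact hp.ne_one (Nat.eq_one_of_dvd_one (by simpa using h3))
  obtain ⟨R, hR⟩ := hZp.nonempty_fixed_point_of_prime_not_dvd_card (Sylow p K) hcard
  have hfix : x' • R = R := hR ⟨x', Subgroup.mem_zpowers x'⟩
  -- push the fixed Sylow subgroup down to `G`
  set Rt : Subgroup G := Subgroup.map K.subtype (R : Subgroup K) with hRt
  have hsmulcoe : ∀ (kk : K), ((x' • kk : K) : G) = x * (kk : G) * x⁻¹ := fun _ => rfl
  have hfix' : x' • (R : Subgroup K) = (R : Subgroup K) := by
    rw [← Sylow.pointwise_smul_def, hfix]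
  have hxR : x ∈ normalizer (Rt : Set G) := by
    rw [Subgroup.mem_normalizer_iff]
    intro h
    constructor
    · rintro ⟨r, hr, rfl⟩
      refine ⟨x' • r, ?_, (hsmulcoe r).symm⟩
      rw [← hfix']
      exact Subgroup.smul_mem_pointwise_smul r x' _ hr
    · rintro ⟨r, hr, hreq⟩
      have hmem : x'⁻¹ • r ∈ (R : Subgroup K) := by
        rw [← hfix'] at hr
        exact (Subgroup.mem_pointwise_smul_iff_inv_smul_mem).mp hr
      refine ⟨x'⁻¹ • r, hmem, ?_⟩
      show ((x'⁻¹ • r : K) : G) = h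
      have hcoe2 : ((x'⁻¹ • r : K) : G) = x⁻¹ * (r : G) * x⁻¹⁻¹ := rfl
      have hreq' : (r : G) = x * h * x⁻¹ := hreq
      rw [hcoe2, hreq']
      group
  -- all Sylow subgroups of `K` are conjugate
  obtain ⟨k, hk⟩ := MulAction.exists_smul_eq K R SH
  have hcoe : (SH : Subgroup K) = MulAut.conj k • (R : Subgroup K) := by
    rw [← hk]; rfl
  have hmapH : Subgroup.map K.subtype (SH : Subgroup K) = H := by
    have : (SH : Subgroup K) = H.subgroupOf K := rfl
    rw [this, Subgroup.subgroupOf_map_subtype, inf_of_le_left hHK]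
  have hconj : H = Subgroup.map (MulAut.conj (k : G)).toMonoidHom Rt := by
    rw [← hmapH, hcoe]
    ext z
    constructor
    · rintro ⟨s, hs, rfl⟩
      obtain ⟨r, hr, rfl⟩ := hs
      exact ⟨(r : G), ⟨r, hr, rfl⟩, rfl⟩
    · rintro ⟨w, ⟨r, hr, rfl⟩, rfl⟩
      exact ⟨MulAut.conj k r, ⟨r, hr, rfl⟩, rfl⟩
  refine ⟨(k : G)⁻¹, ?_, ?_⟩
  · rw [hconj, map_conj_conj, inv_mul_cancel]
    have : Subgroup.map (MulAut.conj (1 : G)).toMonoidHom Rt = Rt := by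
      ext z; simp
    rw [this]
    exact Subgroup.map_subtype_le _
  · rw [hconj, map_conj_conj, inv_mul_cancel]
    have : Subgroup.map (MulAut.conj (1 : G)).toMonoidHom Rt = Rt := by
      ext z; simp
    rw [this]
    exact hxR

end Aux

theorem hcSubgroup_join_coprime {G : Type*} [Group G] [Finite G] (p : ℕ) (hp : p.Prime)
    (H N : Subgroup G) [N.Normal] (hHp : IsPGroup p H) (hpN : ¬ p ∣ Nat.card N)
    (hH : IsHCSubgroup H) :
    IsHCSubgroup (H ⊔ N) ∧ IsHCSubgroup ((H ⊔ N).map (QuotientGroup.mk' N)) := by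
  classical
  obtain ⟨T, hTn, hTsup, hTc⟩ := hH
  haveI := hTn
  -- Step A : N ≤ T
  have hNT : N ≤ T := by
    intro nn hnn
    have h1 : nn ∈ H ⊔ T := hTsup ▸ Subgroup.mem_top nn
    rw [← SetLike.mem_coe, Subgroup.mul_normal] at h1
    obtain ⟨h, hh, t, ht, heq⟩ := h1
    set f := QuotientGroup.mk' T with hf
    have hfn : f nn = f h := by
      have ht1 : f t = 1 := (QuotientGroup.eq_one_iff t).mpr ht
      rw [← heq, map_mul, ht1, mul_one]
    obtain ⟨k, hk⟩ := hHp ⟨h, hh⟩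
    have hh1 : h ^ p ^ k = 1 := by simpa [Subtype.ext_iff] using hk
    have ho1 : orderOf (f nn) ∣ p ^ k := by
      rw [hfn]
      exact orderOf_dvd_of_pow_eq_one (by rw [← map_pow, hh1, map_one])
    have ho2 : orderOf (f nn) ∣ Nat.card N :=
      (orderOf_map_dvd f nn).trans (Subgroup.orderOf_dvd_natCard N hnn)
    have hcop : Nat.Coprime (p ^ k) (Nat.card N) :=
      Nat.Coprime.pow_left k (hp.coprime_iff_not_dvd.mpr hpN)
    have h1 : orderOf (f nn) = 1 :=
      Nat.eq_one_of_dvd_coprimes hcop ho1 ho2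
    exact (QuotientGroup.eq_one_iff nn).mp (orderOf_eq_one_iff.mp h1)
  -- the main membership property for `H ⊔ N`
  have main : ∀ g : G,
      Subgroup.map (MulAut.conj g).toMonoidHom (H ⊔ N) ⊓ (T ⊓ normalizer ((H ⊔ N : Subgroup G) : Set G)) ≤ H ⊔ N := by
    intro g y hy
    rw [Subgroup.mem_inf, Subgroup.mem_inf] at hy
    obtain ⟨hy1, hy2, hy3⟩ := hy
    rw [Subgroup.map_sup, map_conj_normal N g, ← SetLike.mem_coe,
      Subgroup.mul_normal] at hy1
    obtain ⟨h, hh, nn, hnn, rfl⟩ := hy1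
    have hhT : h ∈ T := by
      have hnT : nn ∈ T := hNT hnn
      simpa using T.mul_mem hy2 (T.inv_mem hnT)
    have hhNorm : h ∈ normalizer ((H ⊔ N : Subgroup G) : Set G) := by
      have hnN : nn ∈ normalizer ((H ⊔ N : Subgroup G) : Set G) :=
        Subgroup.le_normalizer (Subgroup.mem_sup_right hnn)
      simpa using (normalizer ((H ⊔ N : Subgroup G) : Set G)).mul_mem hy3 ((normalizer ((H ⊔ N : Subgroup G) : Set G)).inv_mem hnN)
    have hhp : ∃ k0 : ℕ, h ^ p ^ k0 = 1 := by
      obtain ⟨h0, hh0, rfl⟩ := hh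
      obtain ⟨k0, hk0⟩ := hHp ⟨h0, hh0⟩
      have h01 : h0 ^ p ^ k0 = 1 := by simpa [Subtype.ext_iff] using hk0
      exact ⟨k0, by rw [← map_pow, h01, map_one]⟩
    obtain ⟨a, haK, haN⟩ := crux hp H N hHp hpN hhNorm hhp
    have hmem : h ∈ Subgroup.map (MulAut.conj a).toMonoidHom H :=
      hc_conj hTn hTc g a ⟨hh, hhT, haN⟩
    exact (H ⊔ N).mul_mem (haK hmem) (Subgroup.mem_sup_right hnn)
  have hsup2 : (H ⊔ N) ⊔ T = ⊤ := by
    rw [sup_assoc, sup_eq_right.mpr hNT, hTsup]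
  constructor
  · exact ⟨T, hTn, hsup2, main⟩
  · set f := QuotientGroup.mk' N with hf
    have hfsurj : Function.Surjective f := QuotientGroup.mk'_surjective N
    have hmemiff : ∀ z : G, z ∈ H ⊔ N ↔ f z ∈ (H ⊔ N).map f := by
      intro z
      constructor
      · exact fun hz => Subgroup.mem_map_of_mem f hz
      · intro hz
        have : z ∈ Subgroup.comap f ((H ⊔ N).map f) := Subgroup.mem_comap.mpr hz
        rwa [Subgroup.comap_map_eq, QuotientGroup.ker_mk',
          sup_of_le_left le_sup_right] at this
    refine ⟨T.map f, Subgroup.Normal.map hTn f hfsurj, ?_, ?_⟩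
    · rw [← Subgroup.map_sup, hsup2]
      exact Subgroup.map_top_of_surjective f hfsurj
    · intro gq
      obtain ⟨g, rfl⟩ := hfsurj gq
      intro yq hyq
      rw [Subgroup.mem_inf, Subgroup.mem_inf] at hyq
      obtain ⟨hy1, hy2, hy3⟩ := hyq
      have hcomps : (MulAut.conj (f g)).toMonoidHom.comp f
          = f.comp (MulAut.conj g).toMonoidHom := by
        ext z
        simp
      have hcomm : Subgroup.map (MulAut.conj (f g)).toMonoidHom ((H ⊔ N).map f) =
          Subgroup.map f (Subgroup.map (MulAut.conj g).toMonoidHom (H ⊔ N)) := by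
        rw [Subgroup.map_map, Subgroup.map_map, hcomps]
      rw [hcomm] at hy1
      obtain ⟨y, hyK, rfl⟩ := hy1
      have hyT : y ∈ T := by
        have : y ∈ Subgroup.comap f (T.map f) := Subgroup.mem_comap.mpr hy2
        rwa [Subgroup.comap_map_eq, QuotientGroup.ker_mk', sup_of_le_left hNT] at this
      have hyNorm : y ∈ normalizer ((H ⊔ N : Subgroup G) : Set G) := by
        rw [Subgroup.mem_normalizer_iff] at hy3 ⊢
        intro h
        rw [hmemiff h, hmemiff (y * h * y⁻¹)]
        have hpush : f (y * h * y⁻¹) = f y * f h * (f y)⁻¹ := by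
          simp
        rw [hpush]
        exact hy3 (f h)
      have : y ∈ H ⊔ N := main g ⟨hyK, hyT, hyNorm⟩
      exact Subgroup.mem_map_of_mem f this
end

section
/- Let G be a finite group, K a normal subgroup of G, and H a normal subgroup of K. If H is an HC-subgroup of G, then H is c-normal in G. -/
/-- H is c-normal in G if there is a normal subgroup K of G with G = HK and
H ∩ K contained in the normal core of H. -/
def IsCNormal {G : Type*} [Group G] (H : Subgroup G) : Prop :=
  ∃ K : Subgroup G, K.Normal ∧ H ⊔ K = ⊤ ∧ H ⊓ K ≤ H.normalCore

theorem hcSubgroup_cNormal {G : Type*} [Group G] [Finite G] (K H : Subgroup G)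
    [K.Normal] (hHK : H ≤ K) (hHnK : (H.subgroupOf K).Normal)
    (hH : IsHCSubgroup H) : IsCNormal H := by
  obtain ⟨T, hTn, hTtop, hT⟩ := hH
  have hKN : K ≤ Subgroup.normalizer (H : Set G) := by
    intro k hk
    rw [Subgroup.mem_normalizer_iff]
    intro h
    constructor
    · intro hh
      exact hHnK.conj_mem ⟨h, hHK hh⟩ hh ⟨k, hk⟩
    · intro hh
      have h2 := hHnK.conj_mem ⟨k * h * k⁻¹, hHK hh⟩ hh ⟨k, hk⟩⁻¹
      simpa [Subgroup.mem_subgroupOf, mul_assoc] using h2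
  refine ⟨T, hTn, hTtop, ?_⟩
  intro x hx
  obtain ⟨hxH, hxT⟩ := Subgroup.mem_inf.mp hx
  show ∀ g, g * x * g⁻¹ ∈ H
  intro g
  apply hT g
  refine Subgroup.mem_inf.mpr ⟨⟨x, hxH, rfl⟩,
    Subgroup.mem_inf.mpr ⟨hTn.conj_mem x hxT g, hKN (‹K.Normal›.conj_mem x (hHK hxH) g)⟩⟩
end

section
/- Let G be a finite group, p a prime, and H a p-subgroup of G. If H is an HC-subgroup of G but H is not an H-subgroup of G, then G has a normal subgroup M such that |G : M| = p and G = HM. -/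
lemma quotient_nontrivial_of_ne_top {G : Type*} [Group G] (T : Subgroup G) [T.Normal]
    (h : T ≠ ⊤) : Nontrivial (G ⧸ T) := by
  have : ∃ g : G, g ∉ T := by
    by_contra h'
    push_neg at h'
    exact h ((Subgroup.eq_top_iff' T).mpr h')
  obtain ⟨g, hg⟩ := this
  exact nontrivial_of_ne (QuotientGroup.mk g) 1 fun e => hg ((QuotientGroup.eq_one_iff g).mp e)

/-- A nontrivial finite `p`-group has a normal subgroup of index `p`. -/
lemma pgroup_exists_normal_index_p {Q : Type*} [Group Q] [Finite Q] [Nontrivial Q]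
    {p : ℕ} (hp : p.Prime) (hQ : IsPGroup p Q) :
    ∃ K : Subgroup Q, K.Normal ∧ K.index = p := by
  haveI : Fact p.Prime := ⟨hp⟩
  have hbotne : (⊥ : Subgroup Q) ≠ ⊤ := by
    obtain ⟨x, hx⟩ := exists_ne (1 : Q)
    intro hbt
    exact hx (Subgroup.mem_bot.mp (hbt ▸ Subgroup.mem_top x))
  obtain hbt | ⟨K, hK, -⟩ := (Finite.to_isCoatomic (α := Subgroup Q)).eq_top_or_exists_le_coatom ⊥
  · exact absurd hbt hbotne
  haveI : Group.IsNilpotent Q := hQ.isNilpotent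
  have hKnormal : K.Normal :=
    Subgroup.NormalizerCondition.normal_of_coatom K normalizerCondition_of_isNilpotent hK
  refine ⟨K, hKnormal, ?_⟩
  have hKne : K ≠ ⊤ := hK.1
  haveI : Nontrivial (Q ⧸ K) := quotient_nontrivial_of_ne_top K hKne
  have hQK : IsPGroup p (Q ⧸ K) := hQ.to_quotient K
  have hcard : p ∣ Nat.card (Q ⧸ K) := by
    obtain ⟨n, hn⟩ := IsPGroup.iff_card.mp hQK
    rcases n with _ | n
    · simp only [pow_zero] at hn
      exact absurd (Nat.card_eq_one_iff_unique.mp hn).1 (not_subsingleton (Q ⧸ K))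
    · exact hn ▸ dvd_pow_self p (Nat.succ_ne_zero n)
  obtain ⟨y, hy⟩ := exists_prime_orderOf_dvd_card' p hcard
  set Z := (Subgroup.zpowers y).comap (QuotientGroup.mk' K) with hZdef
  have hKZ : K < Z := by
    refine lt_of_le_of_ne (fun k hk => ?_) (fun hKZ => ?_)
    · show QuotientGroup.mk' K k ∈ Subgroup.zpowers y
      have : QuotientGroup.mk' K k = 1 := (QuotientGroup.eq_one_iff k).mpr hk
      rw [this]; exact one_mem _
    · obtain ⟨g, hg⟩ := QuotientGroup.mk'_surjective K y
      have hgZ : g ∈ Z := by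
        show QuotientGroup.mk' K g ∈ Subgroup.zpowers y
        rw [hg]; exact Subgroup.mem_zpowers y
      rw [← hKZ] at hgZ
      have h1 : y = 1 := by rw [← hg]; exact (QuotientGroup.eq_one_iff g).mpr hgZ
      have : orderOf y = 1 := by rw [h1, orderOf_one]
      rw [hy] at this
      exact hp.one_lt.ne' this
  have hZtop : Z = ⊤ := hK.2 Z hKZ
  have hzp : Subgroup.zpowers y = ⊤ := by
    rw [← Subgroup.map_comap_eq_self_of_surjective (QuotientGroup.mk'_surjective K)
      (Subgroup.zpowers y), ← hZdef, hZtop,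
      Subgroup.map_top_of_surjective _ (QuotientGroup.mk'_surjective K)]
  have hcardp : Nat.card (Q ⧸ K) = p := by
    rw [← hy, ← Nat.card_zpowers, hzp]
    exact (Nat.card_congr Subgroup.topEquiv.toEquiv).symm
  rw [Subgroup.index, hcardp]

theorem hcSubgroup_not_hSubgroup_index_p {G : Type*} [Group G] [Finite G] (p : ℕ)
    (hp : p.Prime) (H : Subgroup G) (hHp : IsPGroup p H)
    (hHC : IsHCSubgroup H) (hnH : ¬ IsHSubgroup H) :
    ∃ M : Subgroup G, M.Normal ∧ M.index = p ∧ H ⊔ M = ⊤ := by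
  obtain ⟨T, hTn, hTsup, hTcond⟩ := hHC
  have hTne : T ≠ ⊤ := by
    intro h
    exact hnH fun g => by simpa [h] using hTcond g
  haveI : Nontrivial (G ⧸ T) := quotient_nontrivial_of_ne_top T hTne
  have hQp : IsPGroup p (G ⧸ T) := by
    intro q
    obtain ⟨g, rfl⟩ := QuotientGroup.mk'_surjective T q
    have hg : g ∈ H ⊔ T := hTsup ▸ Subgroup.mem_top g
    rw [← SetLike.mem_coe, Subgroup.mul_normal] at hg
    obtain ⟨h, hh, t, ht, rfl⟩ := hg
    obtain ⟨k, hk⟩ := hHp ⟨h, hh⟩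
    refine ⟨k, ?_⟩
    have hhk : h ^ p ^ k = 1 := by
      have := congrArg (Subgroup.subtype H) hk
      simpa using this
    have ht1 : QuotientGroup.mk' T t = 1 := (QuotientGroup.eq_one_iff t).mpr ht
    rw [map_mul, ht1, mul_one, ← map_pow, hhk, map_one]
  obtain ⟨K, hKn, hKidx⟩ := pgroup_exists_normal_index_p hp hQp
  refine ⟨K.comap (QuotientGroup.mk' T), Subgroup.Normal.comap hKn _, ?_, ?_⟩
  · rw [Subgroup.index_comap_of_surjective _ (QuotientGroup.mk'_surjective T)]
    exact hKidx
  · have hTle : T ≤ K.comap (QuotientGroup.mk' T) := by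
      intro t ht
      have ht1 : QuotientGroup.mk' T t = 1 := (QuotientGroup.eq_one_iff t).mpr ht
      show QuotientGroup.mk' T t ∈ K
      rw [ht1]
      exact one_mem K
    exact top_le_iff.mp (hTsup ▸ sup_le_sup_left hTle H)
end

section
/- Let G be a finite group, H an HC-subgroup of G, and L a normal subgroup of G such that L/Φ(L) is a chief factor of G (i.e., L/Φ(L) is a minimal normal subgroup of G/Φ(L)). If H ≤ L, then H is an H-subgroup of G. -/
/-- The Frattini subgroup of a subgroup L of G, viewed as a subgroup of G. -/
def frattiniOf {G : Type*} [Group G] (L : Subgroup G) : Subgroup G :=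
  Subgroup.map L.subtype (⨅ M ∈ {M : Subgroup L | IsCoatom M}, M)

/-- The Frattini subgroup consists of non-generators: if `K ⊔ Φ(L) = L` with `K ≤ L`,
then `K = L`. -/
lemma frattiniOf_sup_eq {G : Type*} [Group G] [Finite G] {L K : Subgroup G}
    (hK : K ≤ L) (h : K ⊔ frattiniOf L = L) : K = L := by
  haveI : Finite (Subgroup ↥L) := by
    exact Finite.of_injective _ (SetLike.coe_injective (A := Subgroup ↥L))
  set Φ' : Subgroup ↥L := ⨅ M ∈ {M : Subgroup ↥L | IsCoatom M}, M with hΦ'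
  set K' : Subgroup ↥L := Subgroup.comap L.subtype K with hK'
  have hmapK : Subgroup.map L.subtype K' = K := by
    rw [hK', Subgroup.map_comap_eq, L.range_subtype, inf_of_le_right hK]
  have hmapTop : Subgroup.map L.subtype (⊤ : Subgroup ↥L) = L := by
    rw [← MonoidHom.range_eq_map, L.range_subtype]
  have hsup : K' ⊔ Φ' = ⊤ := by
    apply Subgroup.map_injective L.subtype_injective
    rw [Subgroup.map_sup, hmapK, hmapTop]
    exact h
  have hK'top : K' = ⊤ := by
    rcases eq_top_or_exists_le_coatom K' with h1 | ⟨M, hM, hKM⟩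
    · exact h1
    · exfalso
      have hΦM : Φ' ≤ M := iInf₂_le M hM
      have : (⊤ : Subgroup ↥L) ≤ M := by
        rw [← hsup]; exact sup_le hKM hΦM
      exact hM.1 (top_le_iff.mp this)
  rw [← hmapK, hK'top, hmapTop]

theorem hcSubgroup_of_le_chief_frattini {G : Type*} [Group G] [Finite G]
    (H L : Subgroup G) [L.Normal] (hH : IsHCSubgroup H) (hHL : H ≤ L)
    (hphiN : (frattiniOf L).Normal) (hlt : frattiniOf L < L)
    (hchief : ∀ X : Subgroup G, X.Normal → frattiniOf L ≤ X → X ≤ L →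
      X = frattiniOf L ∨ X = L) :
    IsHSubgroup H := by
  obtain ⟨T, hTn, hHT, hTH⟩ := hH
  haveI := hphiN
  have hΦle : frattiniOf L ≤ L := by
    rintro x ⟨y, -, rfl⟩; exact y.2
  have hXn : ((L ⊓ T) ⊔ frattiniOf L).Normal := inferInstance
  have hXL : (L ⊓ T) ⊔ frattiniOf L ≤ L := sup_le inf_le_left hΦle
  rcases hchief ((L ⊓ T) ⊔ frattiniOf L) hXn le_sup_right hXL with hX | hX
  · -- L ⊓ T ≤ Φ(L), so H ⊔ Φ(L) = L and hence H = L is normal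
    have hLTΦ : L ⊓ T ≤ frattiniOf L := le_sup_left.trans hX.le
    have hL : H ⊔ frattiniOf L = L := by
      refine le_antisymm (sup_le hHL hΦle) fun x hx => ?_
      have hx' : x ∈ H ⊔ T := by rw [hHT]; trivial
      rw [← SetLike.mem_coe, Subgroup.mul_normal] at hx'
      obtain ⟨h, hh, t, ht, rfl⟩ := hx'
      have htL : t ∈ L := by
        have : h⁻¹ * (h * t) ∈ L := mul_mem (inv_mem (hHL hh)) hx
        simpa using this
      exact mul_mem (Subgroup.mem_sup_left hh)
        (Subgroup.mem_sup_right (hLTΦ ⟨htL, ht⟩))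
    have hHeq : H = L := frattiniOf_sup_eq hHL hL
    intro g x hx
    obtain ⟨hx1, -⟩ := hx
    obtain ⟨y, hy, rfl⟩ := hx1
    have : L.Normal := inferInstance
    have := this.conj_mem y (hHeq ▸ hy) g
    simpa [hHeq, MulAut.conj_apply] using this
  · -- (L ⊓ T) ⊔ Φ(L) = L, so L ≤ T, hence T = ⊤
    have hLT : L ⊓ T = L := frattiniOf_sup_eq inf_le_left hX
    have hLleT : L ≤ T := by rw [← hLT]; exact inf_le_right
    have hTtop : T = ⊤ := by
      rw [← top_le_iff, ← hHT]
      exact sup_le (hHL.trans hLleT) le_rfl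
    intro g
    have := hTH g
    rwa [hTtop, top_inf_eq] at this
end

section
/- Let G be a finite group, P a normal p-subgroup of G contained in the hypercenter Z_∞(G). Then O^p(G) ≤ C_G(P), i.e., the subgroup generated by all p'-elements of G centralizes P. -/
/-- The hypercenter of a group: the terminal member of the upper central series. -/
def hypercenter (G : Type*) [Group G] : Subgroup G :=
  ⨆ n : ℕ, upperCentralSeries G n

private lemma aux_commute {G : Type*} [Group G] (p : ℕ) (hp : p.Prime)
    (P : Subgroup G) [P.Normal] (hPp : IsPGroup p P) (x : G)
    (hx : Nat.Coprime (orderOf x) p) :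
    ∀ n : ℕ, ∀ g ∈ P, g ∈ upperCentralSeries G n → x * g = g * x := by
  intro n
  induction n with
  | zero =>
    intro g _ hg
    change g ∈ (⊥ : Subgroup G) at hg
    rw [Subgroup.mem_bot] at hg
    simp [hg]
  | succ n ih =>
    intro g hgP hgZ
    set c := g * x * g⁻¹ * x⁻¹ with hc
    have hcP : c ∈ P := by
      have h1 : x * g⁻¹ * x⁻¹ ∈ P := Subgroup.Normal.conj_mem ‹P.Normal› _ (inv_mem hgP) x
      have h2 : g * x * g⁻¹ * x⁻¹ = g * (x * g⁻¹ * x⁻¹) := by group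
      rw [hc, h2]
      exact mul_mem hgP h1
    have hcZ : c ∈ upperCentralSeries G n :=
      (mem_upperCentralSeries_succ_iff.mp hgZ) x
    have hxc : x * c = c * x := ih c hcP hcZ
    have hstep : x * g = c⁻¹ * g * x := by
      rw [hc]; group
    have key : ∀ j : ℕ, x ^ j * g = (c⁻¹) ^ j * g * x ^ j := by
      intro j
      induction j with
      | zero => simp
      | succ j ihj =>
        have hxci : Commute x c⁻¹ := Commute.inv_right (show Commute x c from hxc)
        have hxcj : x * (c⁻¹) ^ j = (c⁻¹) ^ j * x := (hxci.pow_right j).eq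
        calc x ^ (j + 1) * g = x * (x ^ j * g) := by rw [pow_succ']; group
          _ = x * ((c⁻¹) ^ j * g * x ^ j) := by rw [ihj]
          _ = (x * (c⁻¹) ^ j) * g * x ^ j := by group
          _ = ((c⁻¹) ^ j * x) * g * x ^ j := by rw [hxcj]
          _ = (c⁻¹) ^ j * (x * g) * x ^ j := by group
          _ = (c⁻¹) ^ j * (c⁻¹ * g * x) * x ^ j := by rw [hstep]
          _ = (c⁻¹) ^ (j + 1) * g * x ^ (j + 1) := by rw [pow_succ, pow_succ']; group
    have hcm : c ^ orderOf x = 1 := by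
      have := key (orderOf x)
      rw [pow_orderOf_eq_one] at this
      have h2 : (c⁻¹) ^ orderOf x = 1 := by
        have h3 : g = (c⁻¹) ^ orderOf x * g := by simpa using this
        exact right_eq_mul.mp h3
      rw [inv_pow] at h2
      exact inv_eq_one.mp h2
    have hc1 : c = 1 := by
      obtain ⟨k, hk⟩ := hPp ⟨c, hcP⟩
      have hpk : c ^ p ^ k = 1 := by
        have := congrArg (Subtype.val) hk
        simpa using this
      have d1 : orderOf c ∣ orderOf x := orderOf_dvd_of_pow_eq_one hcm
      have d2 : orderOf c ∣ p ^ k := orderOf_dvd_of_pow_eq_one hpk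
      have hcop : Nat.Coprime (orderOf x) (p ^ k) := hx.pow_right k
      have : orderOf c ∣ 1 := hcop ▸ Nat.dvd_gcd d1 d2
      exact orderOf_eq_one_iff.mp (Nat.dvd_one.mp this)
    rw [hstep, hc1]; group

theorem pPrimeElements_centralize_hypercentral_pSubgroup {G : Type*} [Group G]
    [Finite G] (p : ℕ) (hp : p.Prime) (P : Subgroup G) [P.Normal]
    (hPp : IsPGroup p P) (hPZ : P ≤ hypercenter G) :
    Subgroup.closure {x : G | Nat.Coprime (orderOf x) p} ≤
      Subgroup.centralizer (P : Set G) := by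
  rw [Subgroup.closure_le]
  intro x hx
  rw [SetLike.mem_coe, Subgroup.mem_centralizer_iff]
  intro g hgP
  have hgZ : g ∈ ⨆ n : ℕ, Subgroup.upperCentralSeries G n := hPZ hgP
  rw [Subgroup.mem_iSup_of_directed (upperCentralSeries_mono G).directed_le] at hgZ
  obtain ⟨n, hn⟩ := hgZ
  exact (aux_commute p hp P hPp x hx n g hgP hn).symm
end

section
/- Let P be a finite p-group and α a p'-automorphism of P (an automorphism of order coprime to p). If α centralizes Ω₂(P) (the subgroup generated by elements of order dividing p²), then α = 1. -/
section helpers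
variable {G : Type*} [Group G]

lemma shift_pow {c : G} (hc : ∀ g, Commute c g) (k : ℕ) (a b : G) :
    a * c ^ k * b = a * b * c ^ k := by
  rw [mul_assoc, ((hc b).pow_left k).eq, ← mul_assoc]

lemma shift_one {c : G} (hc : ∀ g : G, Commute c g) (a b : G) :
    a * c * b = a * b * c := by
  rw [mul_assoc, (hc b).eq, ← mul_assoc]

lemma conj_pow_of_central {u v c : G} (hc : ∀ g, Commute c g)
    (h : u⁻¹ * v * u = v * c) (n : ℕ) : (u ^ n)⁻¹ * v * u ^ n = v * c ^ n := by
  induction n with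
  | zero => simp
  | succ n ih =>
    calc (u ^ (n+1))⁻¹ * v * u ^ (n+1)
        = u⁻¹ * ((u ^ n)⁻¹ * v * u ^ n) * u := by rw [pow_succ]; group
      _ = u⁻¹ * (v * c ^ n) * u := by rw [ih]
      _ = u⁻¹ * v * c ^ n * u := by rw [← mul_assoc u⁻¹ v (c ^ n)]
      _ = u⁻¹ * v * u * c ^ n := shift_pow hc n _ _
      _ = v * c * c ^ n := by rw [h]
      _ = v * c ^ (n+1) := by rw [pow_succ' c, ← mul_assoc]

lemma pow_mul_of_central {u v c : G} (hc : ∀ g, Commute c g)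
    (h : v * u = u * v * c) (n : ℕ) :
    (u * v) ^ n = u ^ n * v ^ n * c ^ (n.choose 2) := by
  have hvn : ∀ m : ℕ, v ^ m * u = u * v ^ m * c ^ m := by
    intro m
    induction m with
    | zero => simp
    | succ m ih =>
      calc v ^ (m+1) * u = v * (v ^ m * u) := by rw [pow_succ' v, mul_assoc]
        _ = v * (u * v ^ m * c ^ m) := by rw [ih]
        _ = v * u * v ^ m * c ^ m := by rw [← mul_assoc, ← mul_assoc]
        _ = u * v * c * v ^ m * c ^ m := by rw [h]
        _ = u * v ^ (m+1) * c ^ (m+1) := by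
            rw [shift_one hc (u * v) (v ^ m), pow_succ' v, pow_succ' c]; group
  induction n with
  | zero => simp
  | succ n ih =>
    calc (u * v) ^ (n+1) = u ^ n * v ^ n * c ^ (n.choose 2) * (u * v) := by
          rw [pow_succ, ih]
      _ = u ^ n * v ^ n * (u * v) * c ^ (n.choose 2) := shift_pow hc _ _ _
      _ = u ^ n * (v ^ n * u) * v * c ^ (n.choose 2) := by group
      _ = u ^ n * (u * v ^ n * c ^ n) * v * c ^ (n.choose 2) := by rw [hvn n]
      _ = u ^ n * (u * v ^ n) * c ^ n * v * c ^ (n.choose 2) := by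
          rw [← mul_assoc (u ^ n) (u * v ^ n) (c ^ n)]
      _ = u ^ n * (u * v ^ n) * v * c ^ n * c ^ (n.choose 2) := by
          rw [shift_pow hc n (u ^ n * (u * v ^ n)) v]
      _ = u ^ (n+1) * v ^ (n+1) * c ^ ((n+1).choose 2) := by
          rw [Nat.choose_succ_succ, Nat.choose_one_right, pow_add,
            pow_succ u, pow_succ v]; group

end helpers

section crossed
variable {P : Type*} [Group P]

lemma fix_of_left_crossed {p : ℕ} (hPp : IsPGroup p P)
    (α : MulAut P) (hcop : Nat.Coprime (orderOf α) p) {x z : P}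
    (hz : α z = z) (hx : α x = z * x) : α x = x := by
  have hpow : ∀ j : ℕ, (α ^ j) x = z ^ j * x := by
    intro j; induction j with
    | zero => simp
    | succ j ih =>
      rw [pow_succ' α j, MulAut.mul_apply, ih, map_mul, map_pow, hz, hx, ← mul_assoc, ← pow_succ]
  have hd : z ^ orderOf α = 1 := by
    have h := hpow (orderOf α)
    rw [pow_orderOf_eq_one] at h
    have h' : x = z ^ orderOf α * x := by simpa using h
    exact (right_eq_mul.mp h')
  obtain ⟨k, hk⟩ := hPp z
  have h3 : orderOf z ∣ 1 := by
    have := Nat.dvd_gcd (orderOf_dvd_of_pow_eq_one hd) (orderOf_dvd_of_pow_eq_one hk)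
    rwa [Nat.Coprime.gcd_eq_one (hcop.pow_right k)] at this
  have hz1 : z = 1 := orderOf_eq_one_iff.mp (Nat.eq_one_of_dvd_one h3)
  rw [hx, hz1, one_mul]

lemma fix_of_right_crossed {p : ℕ} (hPp : IsPGroup p P)
    (α : MulAut P) (hcop : Nat.Coprime (orderOf α) p) {x z : P}
    (hz : α z = z) (hx : α x = x * z) : α x = x := by
  have hzpow : ∀ j : ℕ, (α ^ j) z = z := by
    intro j; induction j with
    | zero => simp
    | succ j ih => rw [pow_succ' α j, MulAut.mul_apply, ih, hz]
  have hpow : ∀ j : ℕ, (α ^ j) x = x * z ^ j := by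
    intro j; induction j with
    | zero => simp
    | succ j ih =>
      rw [pow_succ α j, MulAut.mul_apply, hx, map_mul, ih, hzpow, pow_succ, ← mul_assoc]
  have hd : z ^ orderOf α = 1 := by
    have h := hpow (orderOf α)
    rw [pow_orderOf_eq_one] at h
    have h' : x = x * z ^ orderOf α := by simpa using h
    exact (left_eq_mul.mp h')
  obtain ⟨k, hk⟩ := hPp z
  have h3 : orderOf z ∣ 1 := by
    have := Nat.dvd_gcd (orderOf_dvd_of_pow_eq_one hd) (orderOf_dvd_of_pow_eq_one hk)
    rwa [Nat.Coprime.gcd_eq_one (hcop.pow_right k)] at this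
  have hz1 : z = 1 := orderOf_eq_one_iff.mp (Nat.eq_one_of_dvd_one h3)
  rw [hx, hz1, mul_one]

end crossed

universe u

open scoped commutatorElement in

theorem auxMain : ∀ (n : ℕ) (P : Type u) [Group P] [Finite P], Nat.card P ≤ n →
    ∀ p : ℕ, p.Prime → IsPGroup p P → ∀ α : MulAut P, Nat.Coprime (orderOf α) p →
    (∀ x : P, x ^ p ^ 2 = 1 → α x = x) → ∀ x : P, α x = x := by
  intro n
  induction n with
  | zero =>
    intro P _ _ hcard p hp hP α hcop hfix x
    haveI : Nonempty P := ⟨1⟩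
    have := Nat.card_pos (α := P)
    omega
  | succ n IH =>
    intro P _ _ hcard p hp hP α hcop hfix
    classical
    let F : Subgroup P :=
      { carrier := {g | α g = g}
        one_mem' := map_one α
        mul_mem' := fun {a b} ha hb => by
          have ha' : α a = a := ha
          have hb' : α b = b := hb
          show α (a * b) = a * b
          rw [map_mul, ha', hb']
        inv_mem' := fun {a} ha => by
          have ha' : α a = a := ha
          show α a⁻¹ = a⁻¹
          rw [map_inv, ha'] }
    have hmemF : ∀ g : P, g ∈ F ↔ α g = g := fun g => Iff.rfl
    by_cases hFtop : F = ⊤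
    · intro x; exact (hmemF x).mp (hFtop ▸ Subgroup.mem_top x)
    -- induction hypothesis for proper invariant subgroups
    have IHsub : ∀ H : Subgroup P, H ≠ ⊤ → Subgroup.map (α : P →* P) H = H →
        ∀ g ∈ H, α g = g := by
      intro H hne hmap g hg
      have hcardH : Nat.card H ≤ n := by
        have h1 : Nat.card H ∣ Nat.card P := Subgroup.card_subgroup_dvd_card H
        have h2 : Nat.card H ≠ Nat.card P := fun h => hne (Subgroup.eq_top_of_card_eq H h)
        have h3 : Nat.card H ≤ Nat.card P := Nat.le_of_dvd Nat.card_pos h1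
        omega
      let β : MulAut H := (α.subgroupMap H).trans (MulEquiv.subgroupCongr hmap)
      have hβcoe : ∀ y : H, (β y : P) = α y := fun y => rfl
      have hβpow : ∀ (k : ℕ) (y : H), ((β ^ k) y : P) = (α ^ k) (y : P) := by
        intro k; induction k with
        | zero => intro y; rfl
        | succ k ihk =>
          intro y
          rw [pow_succ' β k, pow_succ' α k, MulAut.mul_apply, MulAut.mul_apply, hβcoe, ihk]
      have hβord : orderOf β ∣ orderOf α := by
        apply orderOf_dvd_of_pow_eq_one
        ext y
        have h := hβpow (orderOf α) y
        rw [pow_orderOf_eq_one] at h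
        simpa using h
      have hfixβ : ∀ y : H, y ^ p ^ 2 = 1 → β y = y := by
        intro y hy
        apply Subtype.ext
        rw [hβcoe]
        apply hfix
        have h : ((y ^ p ^ 2 : H) : P) = ((1 : H) : P) := by rw [hy]
        simpa using h
      have hall := IH H hcardH p hp (hP.to_subgroup H) β
        (Nat.Coprime.coprime_dvd_left hβord hcop) hfixβ ⟨g, hg⟩
      calc α g = (β ⟨g, hg⟩ : P) := (hβcoe ⟨g, hg⟩).symm
        _ = g := congrArg Subtype.val hall
    -- F is α-invariant
    have hFmap : Subgroup.map (α : P →* P) F = F := by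
      ext g
      simp only [Subgroup.mem_map]
      constructor
      · rintro ⟨y, hy, rfl⟩
        have hy' : α y = y := hy
        show α ((α : P →* P) y) = (α : P →* P) y
        show α (α y) = α y
        rw [hy']
        exact hy'
      · intro hg
        exact ⟨g, hg, hg⟩
    haveI : Fact p.Prime := ⟨hp⟩
    haveI hnil : Group.IsNilpotent P := hP.isNilpotent
    -- F is normal
    have hFnorm : F.Normal := by
      rcases eq_or_ne (Subgroup.normalizer (F : Set P)) ⊤ with hN | hN
      · exact Subgroup.normalizer_eq_top_iff.mp hN
      · exfalso
        have hmapN : Subgroup.map (α : P →* P) (Subgroup.normalizer (F : Set P)) = Subgroup.normalizer (F : Set P) := by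
          exact (Subgroup.map_equiv_normalizer_eq F (α : P ≃* P)).trans
            (congrArg (fun H : Subgroup P => Subgroup.normalizer (H : Set P)) hFmap)
        have hle := IHsub (Subgroup.normalizer (F : Set P)) hN hmapN
        have hlt := normalizerCondition_of_isNilpotent (G := P) F (lt_top_iff_ne_top.mpr hFtop)
        obtain ⟨y, hyN, hyF⟩ := SetLike.exists_of_lt hlt
        exact hyF ((hmemF y).mpr (hle y hyN))
    -- the centralizer of F
    set C := Subgroup.centralizer (F : Set P) with hCdef
    have hCmap : Subgroup.map (α : P →* P) C = C := by
      ext g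
      simp only [Subgroup.mem_map]
      constructor
      · rintro ⟨c, hc, rfl⟩
        rw [Subgroup.mem_centralizer_iff] at hc ⊢
        intro f hf
        have hff : α f = f := hf
        show f * α c = α c * f
        calc f * α c = α f * α c := by rw [hff]
          _ = α (f * c) := (map_mul α f c).symm
          _ = α (c * f) := by rw [hc f hf]
          _ = α c * α f := map_mul α c f
          _ = α c * f := by rw [hff]
      · intro hg
        refine ⟨α⁻¹ g, ?_, by simp⟩
        rw [Subgroup.mem_centralizer_iff] at hg ⊢
        intro f hf
        have hff : α f = f := hf
        apply α.injective
        rw [map_mul, map_mul]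
        have hinv : α (α⁻¹ g) = g := by simp
        rw [hinv, hff, hg f hf]
    by_cases hCtop : C = ⊤
    · -- every element of F is central
      have hcent : ∀ f : P, α f = f → ∀ g : P, Commute f g := by
        intro f hf g
        have hgC : g ∈ C := hCtop ▸ Subgroup.mem_top g
        rw [Subgroup.mem_centralizer_iff] at hgC
        exact (hgC f hf)
      -- the commutator subgroup
      by_cases hDtop : commutator P = ⊤
      · -- P is trivial
        intro x
        have hsub : ∀ m : ℕ, (⊤ : Subgroup P).lowerCentralSeries m = ⊤ := by
          intro m; induction m with
          | zero => exact Subgroup.lowerCentralSeries_zero _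
          | succ m ih =>
            rw [Subgroup.lowerCentralSeries_succ, ih]
            have hcd : commutator P = Subgroup.closure
                {x : P | ∃ p ∈ (⊤ : Subgroup P), ∃ q ∈ (⊤ : Subgroup P), p * q * p⁻¹ * q⁻¹ = x} := by
              rw [commutator_def, Subgroup.commutator_def]
              simp only [commutatorElement_def]
            exact hDtop
        obtain ⟨m, hm⟩ := nilpotent_iff_lowerCentralSeries.mp hnil
        have hbot : (⊤ : Subgroup P) = ⊥ := by rw [← hm, hsub m]
        have hx1 : x = 1 := by
          have : x ∈ (⊥ : Subgroup P) := hbot ▸ Subgroup.mem_top x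
          simpa using this
        rw [hx1, map_one]
      · have hDmap : Subgroup.map (α : P →* P) (commutator P) = commutator P := by
          rw [commutator_def, Subgroup.map_commutator,
            Subgroup.map_top_of_surjective _ α.surjective]
        have hDF := IHsub _ hDtop hDmap
        have hcc : ∀ u v g : P, Commute ⁅u, v⁆ g := by
          intro u v g
          have hm : ⁅u, v⁆ ∈ commutator P := by
            rw [commutator_def]
            exact Subgroup.commutator_mem_commutator (Subgroup.mem_top u) (Subgroup.mem_top v)
          exact hcent _ (hDF _ hm) g
        -- main induction on element orders
        have key : ∀ k : ℕ, ∀ x : P, x ^ p ^ (k + 2) = 1 → α x = x := by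
          intro k
          induction k with
          | zero => exact hfix
          | succ k ihk =>
            intro x hx
            have hxp : (x ^ p) ^ p ^ (k + 2) = 1 := by
              rw [← pow_mul]
              have he : p * p ^ (k + 2) = p ^ (k + 1 + 2) := by
                rw [← pow_succ']
              rw [he]
              exact hx
            have hfixp : α (x ^ p) = x ^ p := ihk _ hxp
            have hab : (α x) ^ p = x ^ p := by rw [← map_pow, hfixp]
            set a := α x with ha
            set c := x * a⁻¹ * x⁻¹ * a with hc
            have hccen : ∀ g, Commute c g := by
              intro g
              have h := hcc x a⁻¹ g
              rw [commutatorElement_def, inv_inv] at h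
              exact h
            have hrel : x⁻¹ * a = a * x⁻¹ * c := by rw [hc]; group
            have hzp : (a * x⁻¹) ^ p = c ^ (p.choose 2) := by
              rw [pow_mul_of_central hccen hrel p, hab, inv_pow, mul_inv_cancel, one_mul]
            have hrel2 : a⁻¹ * x⁻¹ * a = x⁻¹ * c := by rw [hc]; group
            have hcp : c ^ p = 1 := by
              have h := conj_pow_of_central hccen hrel2 p
              rw [hab] at h
              have h2 : (x ^ p)⁻¹ * x⁻¹ * x ^ p = x⁻¹ := by group
              rw [h2] at h
              exact (left_eq_mul.mp h)
            have hz2 : (a * x⁻¹) ^ p ^ 2 = 1 := by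
              rw [sq, pow_mul, hzp, ← pow_mul, Nat.mul_comm, pow_mul, hcp, one_pow]
            have hzfix : α (a * x⁻¹) = a * x⁻¹ := hfix _ hz2
            have hxz : α x = (a * x⁻¹) * x := by rw [← ha]; group
            exact fix_of_left_crossed hP α hcop hzfix hxz
        intro x
        obtain ⟨k, hk⟩ := hP x
        exact key k x (by rw [pow_add, pow_mul, hk, one_pow])
    · -- C is a proper invariant subgroup, so C ≤ F; conclude directly
      have hCF := IHsub C hCtop hCmap
      intro x
      have hgC : x⁻¹ * α x ∈ C := by
        rw [Subgroup.mem_centralizer_iff]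
        intro f hf
        have hff : α f = f := hf
        have h1 : x * f * x⁻¹ ∈ F := hFnorm.conj_mem f hf x
        have h2 : α (x * f * x⁻¹) = x * f * x⁻¹ := h1
        have hconj : α x * f * (α x)⁻¹ = x * f * x⁻¹ := by
          rw [← hff]
          calc α x * α f * (α x)⁻¹ = α (x * f * x⁻¹) := by rw [map_mul, map_mul, map_inv]
            _ = x * f * x⁻¹ := h2
            _ = x * α f * x⁻¹ := by rw [hff]
        have h3 : x⁻¹ * (α x * f * (α x)⁻¹) * x = f := by rw [hconj]; group
        calc f * (x⁻¹ * α x) = (x⁻¹ * (α x * f * (α x)⁻¹) * x) * (x⁻¹ * α x) := by rw [h3]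
          _ = (x⁻¹ * α x) * f := by group
      have hgfix : α (x⁻¹ * α x) = x⁻¹ * α x := hCF _ hgC
      have hxz : α x = x * (x⁻¹ * α x) := by group
      exact fix_of_right_crossed hP α hcop hgfix hxz

theorem pPrimeAut_trivial_of_fixes_omega2 {P : Type*} [Group P] [Finite P] (p : ℕ)
    (hp : p.Prime) (hP : IsPGroup p P) (α : MulAut P)
    (hcop : Nat.Coprime (orderOf α) p)
    (hfix : ∀ x : P, x ^ (p ^ 2) = 1 → α x = x) :
    α = 1 := by
  ext x
  exact auxMain (Nat.card P) P le_rfl p hp hP α hcop hfix x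
end

section
/- Every weakly H-subgroup of a finite group G is an HC-subgroup of G. That is, if there exists a normal subgroup T of G with G = HT and H ∩ T an H-subgroup of G, then there exists a normal subgroup T' of G with G = HT' and H^g ∩ N_{T'}(H) ≤ H for all g ∈ G. -/
/-- H is a weakly H-subgroup of G if there is a normal subgroup T of G with
G = HT and H ∩ T an H-subgroup of G. -/
def IsWeaklyHSubgroup {G : Type*} [Group G] (H : Subgroup G) : Prop :=
  ∃ T : Subgroup G, T.Normal ∧ H ⊔ T = ⊤ ∧ IsHSubgroup (H ⊓ T)

theorem weaklyH_isHC {G : Type*} [Group G] [Finite G] (H : Subgroup G)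
    (h : IsWeaklyHSubgroup H) : IsHCSubgroup H := by
  obtain ⟨T, hT, hHT, hHS⟩ := h
  refine ⟨T, hT, hHT, fun g x hx => ?_⟩
  obtain ⟨⟨y, hyH, hyx⟩, hxT, hxN⟩ := hx
  simp only [MulEquiv.coe_toMonoidHom, MulAut.conj_apply] at hyx
  have hyT : y ∈ T := by
    have hy : y = g⁻¹ * x * g := by rw [← hyx]; group
    rw [hy]
    simpa using hT.conj_mem x hxT g⁻¹
  have hxNHT : x ∈ Subgroup.normalizer ((H ⊓ T : Subgroup G) : Set G) := by
    rw [Subgroup.mem_normalizer_iff]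
    intro z
    constructor
    · rintro ⟨hzH, hzT⟩
      exact ⟨(Subgroup.mem_normalizer_iff.mp hxN z).mp hzH, hT.conj_mem z hzT x⟩
    · rintro ⟨hzH, hzT⟩
      refine ⟨(Subgroup.mem_normalizer_iff.mp hxN z).mpr hzH, ?_⟩
      have := hT.conj_mem _ hzT x⁻¹
      have hz : z = x⁻¹ * (x * z * x⁻¹) * x⁻¹⁻¹ := by group
      rw [hz]; exact this
  have : x ∈ H ⊓ T :=
    hHS g ⟨⟨y, ⟨hyH, hyT⟩, by simpa using hyx⟩, hxNHT⟩
  exact this.1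
end
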